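/- For all integers n and q with 2 < q+1 < ⌊(n-1)/2⌋, there exists a graph G on n vertices that is the edge-disjoint union of q+1 spanning trees and contains three vertices u₀, v₀, w₀ spanning a triangle, each of degree exactly q+2 in G. -/

import Mathlib

namespace Stmt7Aux

open SimpleGraph

theorem isTree_parent {n : ℕ} (f : Fin n → Fin n) (μ : Fin n → ℕ) (r : Fin n)
    (hr : f r = r) (hdec : ∀ v, v ≠ r → μ (f v) < μ v) :
    (SimpleGraph.fromRel fun a b => a ≠ r ∧ b = f a).IsTree := by
  set G := SimpleGraph.fromRel fun a b => a ≠ r ∧ b = f a with hG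
  have hne : ∀ v, v ≠ r → f v ≠ v := by
    intro v h he
    have := hdec v h
    rw [he] at this
    omega
  have hadj : ∀ v, v ≠ r → G.Adj v (f v) := by
    intro v h
    rw [hG, SimpleGraph.fromRel_adj]
    exact ⟨(hne v h).symm, Or.inl ⟨h, rfl⟩⟩
  have key : ∀ k v, μ v ≤ k → G.Reachable v r := by
    intro k
    induction k with
    | zero =>
      intro v hv
      by_cases h : v = r
      · subst h; exact Reachable.refl _
      · exact absurd (hdec v h) (by omega)
    | succ k ih =>
      intro v hv
      by_cases h : v = r
      · subst h; exact Reachable.refl _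
      · exact (hadj v h).reachable.trans (ih (f v) (by have := hdec v h; omega))
  have hconn : G.Connected := by
    rw [connected_iff]
    exact ⟨fun a b => (key _ a le_rfl).trans (key _ b le_rfl).symm, ⟨r⟩⟩
  -- iterate monotone
  have mono : ∀ (u : Fin n) (k : ℕ), μ (f^[k] u) ≤ μ u := by
    intro u k
    induction k with
    | zero => exact le_rfl
    | succ k ih =>
      rw [Function.iterate_succ_apply']
      by_cases h : f^[k] u = r
      · rw [h, hr]; rw [h] at ih; exact ih
      · exact le_trans (le_of_lt (hdec _ h)) ih
  have main : ∀ a : Fin n, a ≠ r → ¬ (G \ fromEdgeSet {s(a, f a)}).Reachable a (f a) := by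
    intro a ha hreach
    obtain ⟨p⟩ := hreach
    have inv : ∀ {x y : Fin n}, (G \ fromEdgeSet {s(a, f a)}).Walk x y →
        (∃ k, f^[k] x = a) → (∃ k, f^[k] y = a) := by
      intro x y p
      induction p with
      | nil => exact id
      | @cons x x' y h p ih =>
        intro hx
        apply ih
        rw [SimpleGraph.sdiff_adj, SimpleGraph.fromEdgeSet_adj] at h
        obtain ⟨hGxx, hnot⟩ := h
        have hxne : s(x, x') ≠ s(a, f a) := by
          intro he
          exact hnot ⟨by rw [he]; exact Set.mem_singleton _, hGxx.ne⟩
        rw [hG, SimpleGraph.fromRel_adj] at hGxx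
        obtain ⟨hxx', hor⟩ := hGxx
        rcases hor with ⟨hxr, hfx⟩ | ⟨hx'r, hfx'⟩
        · -- x' = f x
          have hxa : x ≠ a := by
            intro he
            subst he
            exact hxne (by rw [hfx])
          obtain ⟨k, hk⟩ := hx
          cases k with
          | zero => exact absurd hk hxa
          | succ k =>
            rw [Function.iterate_succ_apply] at hk
            exact ⟨k, by rw [hfx]; exact hk⟩
        · -- x = f x'
          obtain ⟨k, hk⟩ := hx
          exact ⟨k + 1, by rw [Function.iterate_succ_apply, ← hfx', hk]⟩
    obtain ⟨k, hk⟩ := inv p ⟨0, rfl⟩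
    have h1 : μ a ≤ μ (f a) := by
      calc μ a = μ (f^[k] (f a)) := by rw [hk]
      _ ≤ μ (f a) := mono _ _
    exact absurd (hdec a ha) (by omega)
  have hacyc : G.IsAcyclic := by
    rw [isAcyclic_iff_forall_adj_isBridge]
    intro v w hvw
    rw [isBridge_iff]
    have h := hvw
    rw [hG, SimpleGraph.fromRel_adj] at h
    obtain ⟨hne', hor⟩ := h
    rcases hor with ⟨hvr, hw⟩ | ⟨hwr, hv⟩
    · subst hw; exact main v hvr
    · subst hv
      rw [Sym2.eq_swap]
      exact fun hreach => main w hwr hreach.symm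
  exact ⟨hconn, hacyc⟩

end Stmt7Aux

namespace Stmt7Aux

/-- distance from center `i` on cycle `Z_N` -/
def zd (N i w : ℕ) : ℕ := if i ≤ w then w - i else w + N - i

/-- zigzag parent -/
def zp (N i w : ℕ) : ℕ :=
  if zd N i w = 0 then w
  else if zd N i w ≤ N / 2 then
    (if zd N i w ≤ i + 1 then i + 1 - zd N i w else i + 1 + N - zd N i w)
  else (if i + N - zd N i w < N then i + N - zd N i w else i - zd N i w)

/-- zigzag position measure -/
def zmu (N i w : ℕ) : ℕ :=
  if zd N i w = 0 then 0 else if zd N i w ≤ N / 2 then 2 * zd N i w - 1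
  else 2 * (N - zd N i w)

lemma zp_lt {N i w : ℕ} (hi : i < N) (hw : w < N) : zp N i w < N := by
  unfold zp zd; split_ifs <;> omega

lemma zp_self (N i : ℕ) : zp N i i = i := by unfold zp zd; simp

lemma zp_sum {N i w : ℕ} (hi : i < N) (hw : w < N) (hne : w ≠ i) (h2 : 2 * i + 1 < N) :
    w + zp N i w = 2 * i ∨ w + zp N i w = 2 * i + 1 ∨
    w + zp N i w = 2 * i + N ∨ w + zp N i w = 2 * i + 1 + N := by
  unfold zp zd; split_ifs <;> omega

set_option maxHeartbeats 3200000 in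
lemma zmu_dec {N i w : ℕ} (hi : i < N) (hw : w < N) (hne : w ≠ i) (h2 : 2 * i + 1 < N) :
    zmu N i (zp N i w) < zmu N i w := by
  unfold zp zmu zd
  split_ifs <;> omega


/-- parent function for tree `i`; triangle vertices are `n-3, n-2, n-1` -/
def F (n i w : ℕ) : ℕ :=
  if w < n - 3 then zp (n - 3) i w
  else if i = 0 then (if w = n - 2 then n - 3 else 0)
  else if i = 1 then (if w = n - 1 then n - 2 else 1)
  else if i = 2 then (if w = n - 3 then n - 1 else 2)
  else i

/-- measure for tree `i` -/
def M (n i w : ℕ) : ℕ :=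
  if w < n - 3 then zmu (n - 3) i w
  else if i = 0 then (if w = n - 2 then n - 2 else n - 3)
  else if i = 1 then (if w = n - 1 then n - 2 else n - 3)
  else if i = 2 then (if w = n - 3 then n - 2 else n - 3)
  else n - 3

lemma F_lt {n i w : ℕ} (hi : 2 * i + 1 < n - 3) (hw : w < n) : F n i w < n := by
  unfold F
  split_ifs with h
  · have := zp_lt (show i < n - 3 by omega) h; omega
  all_goals omega

lemma F_root {n i : ℕ} (hi : i < n - 3) : F n i i = i := by
  unfold F; rw [if_pos hi, zp_self]

lemma zmu_self (N i : ℕ) : zmu N i i = 0 := by unfold zmu zd; simp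

lemma M_dec {n i w : ℕ} (h2 : 2 * i + 1 < n - 3) (hw : w < n) (hne : w ≠ i) :
    M n i (F n i w) < M n i w := by
  have hi : i < n - 3 := by omega
  by_cases h : w < n - 3
  · unfold F M
    rw [if_pos h, if_pos h, if_pos (zp_lt hi h)]
    exact zmu_dec hi h hne h2
  · have hzmu0 : zmu (n-3) i i = 0 := zmu_self _ _
    have hzmu1 : zmu (n-3) 0 0 = 0 := zmu_self _ _
    have hzmu2 : zmu (n-3) 1 1 = 0 := zmu_self _ _
    have hzmu3 : zmu (n-3) 2 2 = 0 := zmu_self _ _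
    unfold F M
    split_ifs <;> subst_vars <;> omega


set_option maxHeartbeats 3200000 in
lemma adj_char {n q i a b : ℕ} (hn : 2*q + 2 ≤ n - 3) (hi : i ≤ q) (ha : a < n) (hb : b < n)
    (h : (a ≠ i ∧ b = F n i a) ∨ (b ≠ i ∧ a = F n i b)) :
    (a < n - 3 ∧ b < n - 3 ∧ (a + b = 2*i ∨ a + b = 2*i + 1 ∨
        a + b = 2*i + (n-3) ∨ a + b = 2*i + 1 + (n-3)))
    ∨ (a = i ∧ ¬ b < n - 3) ∨ (b = i ∧ ¬ a < n - 3)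
    ∨ (i = 0 ∧ ((a = n-2 ∧ b = n-3) ∨ (b = n-2 ∧ a = n-3)))
    ∨ (i = 1 ∧ ((a = n-1 ∧ b = n-2) ∨ (b = n-1 ∧ a = n-2)))
    ∨ (i = 2 ∧ ((a = n-3 ∧ b = n-1) ∨ (b = n-3 ∧ a = n-1))) := by
  have hiN : i < n - 3 := by omega
  have h2 : 2 * i + 1 < n - 3 := by omega
  rcases h with ⟨hne, hF⟩ | ⟨hne, hF⟩
  · by_cases haN : a < n - 3
    · have hF' : b = zp (n-3) i a := by unfold F at hF; rwa [if_pos haN] at hF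
      have hsum := zp_sum hiN haN hne h2
      rw [← hF'] at hsum
      have hbN : b < n - 3 := hF' ▸ zp_lt hiN haN
      exact Or.inl ⟨haN, hbN, hsum⟩
    · unfold F at hF
      rw [if_neg haN] at hF
      split_ifs at hF <;> subst_vars <;> omega
  · by_cases hbN : b < n - 3
    · have hF' : a = zp (n-3) i b := by unfold F at hF; rwa [if_pos hbN] at hF
      have hsum := zp_sum hiN hbN hne h2
      rw [← hF'] at hsum
      have haN : a < n - 3 := hF' ▸ zp_lt hiN hbN
      exact Or.inl ⟨haN, hbN, by omega⟩
    · unfold F at hF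
      rw [if_neg hbN] at hF
      split_ifs at hF <;> subst_vars <;> omega

set_option maxHeartbeats 3200000 in
lemma disj_nat {n q i j a b : ℕ} (hn : 2*q + 2 ≤ n - 3) (hi : i ≤ q) (hj : j ≤ q)
    (hij : i ≠ j) (ha : a < n) (hb : b < n)
    (h1 : (a ≠ i ∧ b = F n i a) ∨ (b ≠ i ∧ a = F n i b))
    (h2 : (a ≠ j ∧ b = F n j a) ∨ (b ≠ j ∧ a = F n j b)) : False := by
  have c1 := adj_char hn hi ha hb h1
  have c2 := adj_char hn hj ha hb h2
  omega

set_option maxHeartbeats 3200000 in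
lemma nbrx {n q i a : ℕ} (hn : 2*q + 2 ≤ n - 3) (hq : 2 ≤ q) (hi : i ≤ q) (ha : a < n)
    (h : (n-3 ≠ i ∧ a = F n i (n-3)) ∨ (a ≠ i ∧ n-3 = F n i a)) :
    a = n-2 ∨ a = n-1 ∨ (a ≤ q ∧ a ≠ 2) := by
  rcases h with ⟨hne, hF⟩ | ⟨hne, hF⟩
  · unfold F at hF
    split_ifs at hF <;> subst_vars <;> omega
  · by_cases haN : a < n - 3
    · have := zp_lt (show i < n-3 by omega) haN
      unfold F at hF
      rw [if_pos haN] at hF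
      omega
    · unfold F at hF
      rw [if_neg haN] at hF
      split_ifs at hF <;> subst_vars <;> omega

set_option maxHeartbeats 3200000 in
lemma nbry {n q i a : ℕ} (hn : 2*q + 2 ≤ n - 3) (hq : 2 ≤ q) (hi : i ≤ q) (ha : a < n)
    (h : (n-2 ≠ i ∧ a = F n i (n-2)) ∨ (a ≠ i ∧ n-2 = F n i a)) :
    a = n-3 ∨ a = n-1 ∨ (a ≤ q ∧ a ≠ 0) := by
  rcases h with ⟨hne, hF⟩ | ⟨hne, hF⟩
  · unfold F at hF
    split_ifs at hF <;> subst_vars <;> omega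
  · by_cases haN : a < n - 3
    · have := zp_lt (show i < n-3 by omega) haN
      unfold F at hF
      rw [if_pos haN] at hF
      omega
    · unfold F at hF
      rw [if_neg haN] at hF
      split_ifs at hF <;> subst_vars <;> omega

set_option maxHeartbeats 3200000 in
lemma nbrz {n q i a : ℕ} (hn : 2*q + 2 ≤ n - 3) (hq : 2 ≤ q) (hi : i ≤ q) (ha : a < n)
    (h : (n-1 ≠ i ∧ a = F n i (n-1)) ∨ (a ≠ i ∧ n-1 = F n i a)) :
    a = n-3 ∨ a = n-2 ∨ (a ≤ q ∧ a ≠ 1) := by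
  rcases h with ⟨hne, hF⟩ | ⟨hne, hF⟩
  · unfold F at hF
    split_ifs at hF <;> subst_vars <;> omega
  · by_cases haN : a < n - 3
    · have := zp_lt (show i < n-3 by omega) haN
      unfold F at hF
      rw [if_pos haN] at hF
      omega
    · unfold F at hF
      rw [if_neg haN] at hF
      split_ifs at hF <;> subst_vars <;> omega

end Stmt7Aux

open Stmt7Aux in
set_option maxHeartbeats 1600000 in
theorem stmt7 (n q : ℕ) (hq2 : 2 < q + 1) (hq : q + 1 < (n - 1) / 2) :
    ∃ (G : SimpleGraph (Fin n)) (T : Fin (q + 1) → SimpleGraph (Fin n))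
      (u₀ v₀ w₀ : Fin n),
      (∀ i, (T i).IsTree) ∧
      (Pairwise fun i j => Disjoint (T i).edgeSet (T j).edgeSet) ∧
      (⨆ i, T i) = G ∧
      u₀ ≠ v₀ ∧ v₀ ≠ w₀ ∧ u₀ ≠ w₀ ∧
      G.Adj u₀ v₀ ∧ G.Adj v₀ w₀ ∧ G.Adj u₀ w₀ ∧
      (G.neighborSet u₀).ncard = q + 2 ∧
      (G.neighborSet v₀).ncard = q + 2 ∧
      (G.neighborSet w₀).ncard = q + 2 := by
  classical
  have hq' : 2 ≤ q := by omega
  have hn9 : 2*q + 5 ≤ n := by omega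
  have hN : 2*q + 2 ≤ n - 3 := by omega
  have hilt : ∀ i : Fin (q+1), i.val ≤ q := fun i => Nat.lt_succ_iff.mp i.isLt
  let f : Fin (q+1) → Fin n → Fin n := fun i v =>
    ⟨F n i.val v.val, F_lt (by have := i.isLt; omega) v.isLt⟩
  let r : Fin (q+1) → Fin n := fun i => ⟨i.val, by have := i.isLt; omega⟩
  let T : Fin (q+1) → SimpleGraph (Fin n) := fun i =>
    SimpleGraph.fromRel fun a b => a ≠ r i ∧ b = f i a
  let u₀ : Fin n := ⟨n-3, by omega⟩
  let v₀ : Fin n := ⟨n-2, by omega⟩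
  let w₀ : Fin n := ⟨n-1, by omega⟩
  -- F value computations
  have hF0x : F n 0 (n-3) = 0 := by unfold F; split_ifs <;> first | contradiction | omega
  have hF0y : F n 0 (n-2) = n-3 := by unfold F; split_ifs <;> first | contradiction | omega
  have hF0z : F n 0 (n-1) = 0 := by unfold F; split_ifs <;> first | contradiction | omega
  have hF1x : F n 1 (n-3) = 1 := by unfold F; split_ifs <;> first | contradiction | omega
  have hF1y : F n 1 (n-2) = 1 := by unfold F; split_ifs <;> first | contradiction | omega
  have hF1z : F n 1 (n-1) = n-2 := by unfold F; split_ifs <;> first | contradiction | omega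
  have hF2x : F n 2 (n-3) = n-1 := by unfold F; split_ifs <;> first | contradiction | omega
  have hF2y : F n 2 (n-2) = 2 := by unfold F; split_ifs <;> first | contradiction | omega
  have hF2z : F n 2 (n-1) = 2 := by unfold F; split_ifs <;> first | contradiction | omega
  have hFkx : ∀ k, 3 ≤ k → F n k (n-3) = k := by
    intro k hk; unfold F; split_ifs <;> first | contradiction | omega
  have hFky : ∀ k, 3 ≤ k → F n k (n-2) = k := by
    intro k hk; unfold F; split_ifs <;> first | contradiction | omega
  have hFkz : ∀ k, 3 ≤ k → F n k (n-1) = k := by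
    intro k hk; unfold F; split_ifs <;> first | contradiction | omega
  -- adjacency builder
  have adjval : ∀ (i : Fin (q+1)) (a b : Fin n), a.val ≠ i.val →
      b.val = F n i.val a.val → a ≠ b → (⨆ k, T k).Adj a b := by
    intro i a b har hb hab
    rw [SimpleGraph.iSup_adj]
    refine ⟨i, ?_⟩
    rw [SimpleGraph.fromRel_adj]
    exact ⟨hab, Or.inl ⟨fun h => har (congrArg Fin.val h), Fin.ext hb⟩⟩
  have hxy : (⨆ k, T k).Adj u₀ v₀ := by
    refine (adjval ⟨0, by omega⟩ v₀ u₀ (by show n-2 ≠ 0; omega) ?_ ?_).symm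
    · show n - 3 = F n 0 (n-2); omega
    · intro h; have h' : n - 2 = n - 3 := congrArg Fin.val h; omega
  have hyz : (⨆ k, T k).Adj v₀ w₀ := by
    refine (adjval ⟨1, by omega⟩ w₀ v₀ (by show n-1 ≠ 1; omega) ?_ ?_).symm
    · show n - 2 = F n 1 (n-1); omega
    · intro h; have h' : n - 1 = n - 2 := congrArg Fin.val h; omega
  have hxz : (⨆ k, T k).Adj u₀ w₀ := by
    refine adjval ⟨2, by omega⟩ u₀ w₀ (by show n-3 ≠ 2; omega) ?_ ?_
    · show n - 1 = F n 2 (n-3); omega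
    · intro h; have h' : n - 3 = n - 1 := congrArg Fin.val h; omega
  -- trees
  have htree : ∀ i, (T i).IsTree := by
    intro i
    apply isTree_parent (f i) (fun v => M n i.val v.val) (r i)
    · exact Fin.ext (F_root (show i.val < n - 3 by have := i.isLt; omega))
    · intro v hv
      exact M_dec (by have := i.isLt; omega) v.isLt (fun h => hv (Fin.ext h))
  -- disjointness
  have hdisj : Pairwise fun i j => Disjoint (T i).edgeSet (T j).edgeSet := by
    intro i j hij
    rw [Set.disjoint_left]
    intro e h1 h2
    induction e using Sym2.ind with
    | _ a b =>
      rw [SimpleGraph.mem_edgeSet, SimpleGraph.fromRel_adj] at h1 h2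
      obtain ⟨hab, hor1⟩ := h1
      obtain ⟨-, hor2⟩ := h2
      refine disj_nat hN (hilt i) (hilt j) (fun h => hij (Fin.ext h)) a.isLt b.isLt ?_ ?_
      · rcases hor1 with ⟨h1a, h1b⟩ | ⟨h1a, h1b⟩
        · exact Or.inl ⟨fun h => h1a (Fin.ext h), congrArg Fin.val h1b⟩
        · exact Or.inr ⟨fun h => h1a (Fin.ext h), congrArg Fin.val h1b⟩
      · rcases hor2 with ⟨h2a, h2b⟩ | ⟨h2a, h2b⟩
        · exact Or.inl ⟨fun h => h2a (Fin.ext h), congrArg Fin.val h2b⟩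
        · exact Or.inr ⟨fun h => h2a (Fin.ext h), congrArg Fin.val h2b⟩
  -- bound for attachFin
  have hbd : ∀ t : ℕ, ∀ m ∈ (Finset.range (q+1)).erase t, m < n := by
    intro t m hm
    rw [Finset.mem_erase, Finset.mem_range] at hm
    omega
  -- neighbor set of u₀
  have hnx : (⨆ k, T k).neighborSet u₀ =
      ↑(insert v₀ (insert w₀ (((Finset.range (q+1)).erase 2).attachFin (hbd 2)))) := by
    ext v
    rw [SimpleGraph.mem_neighborSet, Finset.mem_coe, Finset.mem_insert, Finset.mem_insert,
      Finset.mem_attachFin, Finset.mem_erase, Finset.mem_range]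
    constructor
    · intro h
      rw [SimpleGraph.iSup_adj] at h
      obtain ⟨i, hi⟩ := h
      rw [SimpleGraph.fromRel_adj] at hi
      obtain ⟨hne, hor⟩ := hi
      have key : v.val = n-2 ∨ v.val = n-1 ∨ (v.val ≤ q ∧ v.val ≠ 2) := by
        apply nbrx hN hq' (hilt i) v.isLt
        rcases hor with ⟨h1, h2⟩ | ⟨h1, h2⟩
        · exact Or.inl ⟨by have := i.isLt; omega, congrArg Fin.val h2⟩
        · exact Or.inr ⟨fun hh => h1 (Fin.ext hh), congrArg Fin.val h2⟩
      rcases key with h | h | h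
      · exact Or.inl (Fin.ext h)
      · exact Or.inr (Or.inl (Fin.ext h))
      · exact Or.inr (Or.inr ⟨h.2, by omega⟩)
    · intro h
      rcases h with h | h | ⟨h2, hlt⟩
      · subst h; exact hxy
      · subst h; exact hxz
      · rcases Nat.lt_or_ge v.val 3 with h3 | h3
        · rcases (show v.val = 0 ∨ v.val = 1 by omega) with h0 | h0
          · refine adjval ⟨0, by omega⟩ u₀ v (by show n-3 ≠ 0; omega)
              (by show v.val = F n 0 (n-3); rw [hF0x]; omega) ?_
            intro hh; have : n-3 = v.val := congrArg Fin.val hh; omega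
          · refine adjval ⟨1, by omega⟩ u₀ v (by show n-3 ≠ 1; omega)
              (by show v.val = F n 1 (n-3); rw [hF1x]; omega) ?_
            intro hh; have : n-3 = v.val := congrArg Fin.val hh; omega
        · refine adjval ⟨v.val, by omega⟩ u₀ v (by show n-3 ≠ v.val; omega)
            (by show v.val = F n v.val (n-3); rw [hFkx v.val h3]) ?_
          intro hh; have : n-3 = v.val := congrArg Fin.val hh; omega
  -- neighbor set of v₀
  have hny : (⨆ k, T k).neighborSet v₀ =
      ↑(insert u₀ (insert w₀ (((Finset.range (q+1)).erase 0).attachFin (hbd 0)))) := by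
    ext v
    rw [SimpleGraph.mem_neighborSet, Finset.mem_coe, Finset.mem_insert, Finset.mem_insert,
      Finset.mem_attachFin, Finset.mem_erase, Finset.mem_range]
    constructor
    · intro h
      rw [SimpleGraph.iSup_adj] at h
      obtain ⟨i, hi⟩ := h
      rw [SimpleGraph.fromRel_adj] at hi
      obtain ⟨hne, hor⟩ := hi
      have key : v.val = n-3 ∨ v.val = n-1 ∨ (v.val ≤ q ∧ v.val ≠ 0) := by
        apply nbry hN hq' (hilt i) v.isLt
        rcases hor with ⟨h1, h2⟩ | ⟨h1, h2⟩
        · exact Or.inl ⟨by have := i.isLt; omega, congrArg Fin.val h2⟩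
        · exact Or.inr ⟨fun hh => h1 (Fin.ext hh), congrArg Fin.val h2⟩
      rcases key with h | h | h
      · exact Or.inl (Fin.ext h)
      · exact Or.inr (Or.inl (Fin.ext h))
      · exact Or.inr (Or.inr ⟨h.2, by omega⟩)
    · intro h
      rcases h with h | h | ⟨h2, hlt⟩
      · subst h; exact hxy.symm
      · subst h; exact hyz
      · rcases Nat.lt_or_ge v.val 3 with h3 | h3
        · rcases (show v.val = 1 ∨ v.val = 2 by omega) with h0 | h0
          · refine adjval ⟨1, by omega⟩ v₀ v (by show n-2 ≠ 1; omega)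
              (by show v.val = F n 1 (n-2); rw [hF1y]; omega) ?_
            intro hh; have : n-2 = v.val := congrArg Fin.val hh; omega
          · refine adjval ⟨2, by omega⟩ v₀ v (by show n-2 ≠ 2; omega)
              (by show v.val = F n 2 (n-2); rw [hF2y]; omega) ?_
            intro hh; have : n-2 = v.val := congrArg Fin.val hh; omega
        · refine adjval ⟨v.val, by omega⟩ v₀ v (by show n-2 ≠ v.val; omega)
            (by show v.val = F n v.val (n-2); rw [hFky v.val h3]) ?_
          intro hh; have : n-2 = v.val := congrArg Fin.val hh; omega
  -- neighbor set of w₀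
  have hnz : (⨆ k, T k).neighborSet w₀ =
      ↑(insert u₀ (insert v₀ (((Finset.range (q+1)).erase 1).attachFin (hbd 1)))) := by
    ext v
    rw [SimpleGraph.mem_neighborSet, Finset.mem_coe, Finset.mem_insert, Finset.mem_insert,
      Finset.mem_attachFin, Finset.mem_erase, Finset.mem_range]
    constructor
    · intro h
      rw [SimpleGraph.iSup_adj] at h
      obtain ⟨i, hi⟩ := h
      rw [SimpleGraph.fromRel_adj] at hi
      obtain ⟨hne, hor⟩ := hi
      have key : v.val = n-3 ∨ v.val = n-2 ∨ (v.val ≤ q ∧ v.val ≠ 1) := by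
        apply nbrz hN hq' (hilt i) v.isLt
        rcases hor with ⟨h1, h2⟩ | ⟨h1, h2⟩
        · exact Or.inl ⟨by have := i.isLt; omega, congrArg Fin.val h2⟩
        · exact Or.inr ⟨fun hh => h1 (Fin.ext hh), congrArg Fin.val h2⟩
      rcases key with h | h | h
      · exact Or.inl (Fin.ext h)
      · exact Or.inr (Or.inl (Fin.ext h))
      · exact Or.inr (Or.inr ⟨h.2, by omega⟩)
    · intro h
      rcases h with h | h | ⟨h2, hlt⟩
      · subst h; exact hxz.symm
      · subst h; exact hyz.symm
      · rcases Nat.lt_or_ge v.val 3 with h3 | h3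
        · rcases (show v.val = 0 ∨ v.val = 2 by omega) with h0 | h0
          · refine adjval ⟨0, by omega⟩ w₀ v (by show n-1 ≠ 0; omega)
              (by show v.val = F n 0 (n-1); rw [hF0z]; omega) ?_
            intro hh; have : n-1 = v.val := congrArg Fin.val hh; omega
          · refine adjval ⟨2, by omega⟩ w₀ v (by show n-1 ≠ 2; omega)
              (by show v.val = F n 2 (n-1); rw [hF2z]; omega) ?_
            intro hh; have : n-1 = v.val := congrArg Fin.val hh; omega
        · refine adjval ⟨v.val, by omega⟩ w₀ v (by show n-1 ≠ v.val; omega)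
            (by show v.val = F n v.val (n-1); rw [hFkz v.val h3]) ?_
          intro hh; have : n-1 = v.val := congrArg Fin.val hh; omega
  -- cardinalities
  have hcardgen : ∀ (t : ℕ) (a b : Fin n), t ≤ q → a ≠ b → (q+1 : ℕ) ≤ a.val → (q+1 : ℕ) ≤ b.val →
      (insert a (insert b (((Finset.range (q+1)).erase t).attachFin (hbd t)))).card = q + 2 := by
    intro t a b ht hab ha hb
    rw [Finset.card_insert_of_notMem, Finset.card_insert_of_notMem,
      Finset.card_attachFin, Finset.card_erase_of_mem (Finset.mem_range.mpr (by omega)),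
      Finset.card_range]
    · omega
    · rw [Finset.mem_attachFin, Finset.mem_erase, Finset.mem_range]
      omega
    · rw [Finset.mem_insert, Finset.mem_attachFin, Finset.mem_erase, Finset.mem_range]
      push_neg
      exact ⟨hab, fun _ => by omega⟩
  refine ⟨⨆ k, T k, T, u₀, v₀, w₀, htree, hdisj, rfl, ?_, ?_, ?_, hxy, hyz, hxz, ?_, ?_, ?_⟩
  · intro h; have h' : n - 3 = n - 2 := congrArg Fin.val h; omega
  · intro h; have h' : n - 2 = n - 1 := congrArg Fin.val h; omega
  · intro h; have h' : n - 3 = n - 1 := congrArg Fin.val h; omega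
  · rw [hnx, Set.ncard_coe_finset]
    exact hcardgen 2 v₀ w₀ (by omega)
      (fun h => by have h' : n - 2 = n - 1 := congrArg Fin.val h; omega)
      (by show q+1 ≤ n-2; omega) (by show q+1 ≤ n-1; omega)
  · rw [hny, Set.ncard_coe_finset]
    exact hcardgen 0 u₀ w₀ (by omega)
      (fun h => by have h' : n - 3 = n - 1 := congrArg Fin.val h; omega)
      (by show q+1 ≤ n-3; omega) (by show q+1 ≤ n-1; omega)
  · rw [hnz, Set.ncard_coe_finset]
    exact hcardgen 1 u₀ v₀ (by omega)
      (fun h => by have h' : n - 3 = n - 2 := congrArg Fin.val h; omega)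
      (by show q+1 ≤ n-3; omega) (by show q+1 ≤ n-2; omega)
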